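/- Let Λ₀ ⊆ ℝ^d be an f-invariant set (f(Λ₀) = Λ₀) with compact closure, equipped with maps E, F assigning to each x ∈ Λ₀ linear subspaces E(x), F(x) ⊆ ℝ^d such that ℝ^d = E(x) ⊕ F(x), dim E(x) = i for all x ∈ Λ₀, Df_x(E(x)) = E(f(x)) and Df_x(F(x)) = F(f(x)), and such that the domination inequality holds with constants C > 0, λ ∈ (0,1): for every x ∈ Λ₀, n ≥ 0 and nonzero u ∈ E(x), v ∈ F(x), ‖D(f^n)_x u‖/‖u‖ ≤ C·λ^n·‖D(f^n)_x v‖/‖v‖ (continuity of E, F is NOT assumed). Then the closure of Λ₀ is f-invariant and there exist maps Ē, F̄ on the closure of Λ₀, agreeing with E, F on Λ₀, which form a dominated splitting on the closure with the same constants C, λ and constant index i; in particular Ē and F̄ vary continuously. -/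

import Mathlib

open Set

noncomputable section

abbrev Euc (d : ℕ) := EuclideanSpace ℝ (Fin d)

/-- f is a C¹ diffeomorphism of ℝ^d. -/
def IsC1Diffeo {d : ℕ} (f : Euc d → Euc d) : Prop :=
  Function.Bijective f ∧ ContDiff ℝ 1 f ∧
    ∃ g : Euc d → Euc d, ContDiff ℝ 1 g ∧ Function.LeftInverse g f ∧ Function.RightInverse g f

/-- The orthogonal projection onto V, as an endomorphism. -/
def projSub {d : ℕ} (V : Submodule ℝ (Euc d)) : Euc d →L[ℝ] Euc d :=
  V.subtypeL.comp (V.orthogonalProjectionOnto)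

/-- The domination inequality. -/
def DomIneq {d : ℕ} (f : Euc d → Euc d) (Λ : Set (Euc d))
    (E F : Euc d → Submodule ℝ (Euc d)) (C lam : ℝ) : Prop :=
  ∀ x ∈ Λ, ∀ n : ℕ, ∀ u ∈ E x, u ≠ 0 → ∀ v ∈ F x, v ≠ 0 →
    ‖fderiv ℝ (f^[n]) x u‖ / ‖u‖ ≤ C * lam ^ n * (‖fderiv ℝ (f^[n]) x v‖ / ‖v‖)

/-- Dominated splitting on Λ with constants C, lam. -/
def IsDomSplitting {d : ℕ} (f : Euc d → Euc d) (Λ : Set (Euc d))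
    (E F : Euc d → Submodule ℝ (Euc d)) (C lam : ℝ) : Prop :=
  (∀ x ∈ Λ, IsCompl (E x) (F x)) ∧
  (∀ x ∈ Λ, (E x).map ((fderiv ℝ f x : Euc d →ₗ[ℝ] Euc d)) = E (f x)) ∧
  (∀ x ∈ Λ, (F x).map ((fderiv ℝ f x : Euc d →ₗ[ℝ] Euc d)) = F (f x)) ∧
  ContinuousOn (fun x => projSub (E x)) Λ ∧
  ContinuousOn (fun x => projSub (F x)) Λ ∧
  DomIneq f Λ E F C lam

open Filter Module Topology

namespace DSExt

variable {d : ℕ}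

lemma projSub_apply (V : Submodule ℝ (Euc d)) (u : Euc d) :
    projSub V u = (V.orthogonalProjectionOnto u : Euc d) := rfl

lemma projSub_mem (V : Submodule ℝ (Euc d)) (u : Euc d) : projSub V u ∈ V :=
  (V.orthogonalProjectionOnto u).2

lemma projSub_eq_self_iff {V : Submodule ℝ (Euc d)} {u : Euc d} :
    projSub V u = u ↔ u ∈ V := Submodule.starProjection_eq_self_iff

lemma projSub_of_mem {V : Submodule ℝ (Euc d)} {u : Euc d} (h : u ∈ V) : projSub V u = u :=
  projSub_eq_self_iff.mpr h

lemma projSub_norm_apply_le (V : Submodule ℝ (Euc d)) (u : Euc d) : ‖projSub V u‖ ≤ ‖u‖ := by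
  have h := (V.orthogonalProjectionOnto).le_opNorm u
  have h2 := Submodule.orthogonalProjectionOnto_norm_le V
  calc ‖projSub V u‖ = ‖V.orthogonalProjectionOnto u‖ := rfl
    _ ≤ ‖V.orthogonalProjectionOnto‖ * ‖u‖ := h
    _ ≤ 1 * ‖u‖ := by have := norm_nonneg u; nlinarith
    _ = ‖u‖ := one_mul _

lemma projSub_inner (V : Submodule ℝ (Euc d)) (u w : Euc d) :
    (inner ℝ (projSub V u) w : ℝ) = inner ℝ u (projSub V w) :=
  Submodule.inner_starProjection_left_eq_right V u w

lemma tendsto_clm_apply {T : ℕ → Euc d →L[ℝ] Euc d} {S : Euc d →L[ℝ] Euc d}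
    {u : ℕ → Euc d} {w : Euc d} (hT : Tendsto T atTop (𝓝 S)) (hu : Tendsto u atTop (𝓝 w)) :
    Tendsto (fun k => T k (u k)) atTop (𝓝 (S w)) := by
  have h := (isBoundedBilinearMap_apply (𝕜 := ℝ) (E := Euc d) (F := Euc d)).continuous
  exact (h.tendsto (S, w)).comp (hT.prodMk_nhds hu)

/-- a limit of orthogonal projections is the orthogonal projection onto its range -/
lemma proj_of_tendsto {V : ℕ → Submodule ℝ (Euc d)} {P : Euc d →L[ℝ] Euc d}
    (hP : Tendsto (fun k => projSub (V k)) atTop (𝓝 P)) :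
    P = projSub (LinearMap.range (P : Euc d →ₗ[ℝ] Euc d)) := by
  have hidem : ∀ u, P (P u) = P u := by
    intro u
    have h1 : Tendsto (fun k => projSub (V k) (projSub (V k) u)) atTop (𝓝 (P (P u))) :=
      tendsto_clm_apply hP (tendsto_clm_apply hP tendsto_const_nhds)
    have h2 : Tendsto (fun k => projSub (V k) (projSub (V k) u)) atTop (𝓝 (P u)) := by
      have : (fun k => projSub (V k) (projSub (V k) u)) = fun k => projSub (V k) u := by
        funext k; exact projSub_of_mem (projSub_mem _ _)
      rw [this]; exact tendsto_clm_apply hP tendsto_const_nhds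
    exact tendsto_nhds_unique h1 h2
  have hsymm : ∀ u w, (inner ℝ (P u) w : ℝ) = inner ℝ u (P w) := by
    intro u w
    have h1 : Tendsto (fun k => (inner ℝ (projSub (V k) u) w : ℝ)) atTop (𝓝 (inner ℝ (P u) w)) :=
      (tendsto_clm_apply hP tendsto_const_nhds).inner tendsto_const_nhds
    have h2 : Tendsto (fun k => (inner ℝ (projSub (V k) u) w : ℝ)) atTop (𝓝 (inner ℝ u (P w))) := by
      simp only [fun k => projSub_inner (V k) u w]
      exact (tendsto_const_nhds (x := u)).inner (tendsto_clm_apply hP tendsto_const_nhds)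
    exact tendsto_nhds_unique h1 h2
  refine ContinuousLinearMap.ext fun u => ?_
  have hmem : P u ∈ LinearMap.range (P : Euc d →ₗ[ℝ] Euc d) := ⟨u, rfl⟩
  have key : ((LinearMap.range (P : Euc d →ₗ[ℝ] Euc d)).orthogonalProjectionOnto u : Euc d) = P u := by
    apply Submodule.eq_starProjection_of_mem_of_inner_eq_zero hmem
    rintro w ⟨z, rfl⟩
    have h3 : (inner ℝ (u - P u) ((P : Euc d →ₗ[ℝ] Euc d) z) : ℝ) = inner ℝ (P (u - P u)) z := by
      simpa using (hsymm (u - P u) z).symm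
    rw [h3]
    simp [map_sub, hidem u]
  rw [projSub_apply, key]

lemma mem_of_tendsto_proj {V : ℕ → Submodule ℝ (Euc d)} {W : Submodule ℝ (Euc d)}
    (hP : Tendsto (fun k => projSub (V k)) atTop (𝓝 (projSub W)))
    {u : ℕ → Euc d} {w : Euc d} (hu : ∀ k, u k ∈ V k) (huw : Tendsto u atTop (𝓝 w)) :
    w ∈ W := by
  have h1 : Tendsto (fun k => projSub (V k) (u k)) atTop (𝓝 (projSub W w)) :=
    tendsto_clm_apply hP huw
  have h2 : Tendsto (fun k => projSub (V k) (u k)) atTop (𝓝 w) := by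
    have : (fun k => projSub (V k) (u k)) = u := funext fun k => projSub_of_mem (hu k)
    rw [this]; exact huw
  exact projSub_eq_self_iff.mp (tendsto_nhds_unique h1 h2)

lemma tendsto_proj_apply {V : ℕ → Submodule ℝ (Euc d)} {W : Submodule ℝ (Euc d)}
    (hP : Tendsto (fun k => projSub (V k)) atTop (𝓝 (projSub W)))
    {w : Euc d} (hw : w ∈ W) :
    Tendsto (fun k => projSub (V k) w) atTop (𝓝 w) := by
  have := tendsto_clm_apply hP (tendsto_const_nhds (x := w))
  rwa [projSub_of_mem hw] at this

lemma finrank_le_of_proj_close {V W : Submodule ℝ (Euc d)}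
    (h : ‖projSub V - projSub W‖ < 1) : finrank ℝ W ≤ finrank ℝ V := by
  have hmap : ∀ x ∈ W, (projSub V : Euc d →ₗ[ℝ] Euc d) x ∈ V := fun x _ => projSub_mem V x
  have hinj : Function.Injective
      (((projSub V : Euc d →ₗ[ℝ] Euc d)).restrict hmap) := by
    rw [← LinearMap.ker_eq_bot, LinearMap.ker_eq_bot']
    intro m hm
    have hm' : projSub V (m : Euc d) = 0 := by
      have := congrArg (Subtype.val) hm
      simpa [LinearMap.restrict_apply] using this
    have hmem : projSub W (m : Euc d) = (m : Euc d) := projSub_of_mem m.2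
    have : ‖(m : Euc d)‖ = ‖(projSub V - projSub W) (m : Euc d)‖ := by
      rw [ContinuousLinearMap.sub_apply, hm', hmem]; simp
    have hle : ‖(projSub V - projSub W) (m : Euc d)‖ ≤
        ‖projSub V - projSub W‖ * ‖(m : Euc d)‖ := (projSub V - projSub W).le_opNorm _
    have hnn : ‖(m : Euc d)‖ = 0 := by nlinarith [norm_nonneg (m : Euc d)]
    exact Subtype.ext (norm_eq_zero.mp hnn)
  exact LinearMap.finrank_le_finrank_of_injective hinj

lemma finrank_eq_of_proj_close {V W : Submodule ℝ (Euc d)}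
    (h : ‖projSub V - projSub W‖ < 1) : finrank ℝ V = finrank ℝ W := by
  have h' : ‖projSub W - projSub V‖ < 1 := by rwa [norm_sub_rev]
  exact le_antisymm (finrank_le_of_proj_close h') (finrank_le_of_proj_close h)

lemma isCompl_of_disjoint_finrank {p q : Submodule ℝ (Euc d)}
    (h : ∀ w, w ∈ p → w ∈ q → w = 0)
    (hr : finrank ℝ p + finrank ℝ q = d) : IsCompl p q := by
  have hdisj : Disjoint p q := by
    rw [Submodule.disjoint_def]; exact h
  have hinf : p ⊓ q = ⊥ := disjoint_iff.mp hdisj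
  have hsum := Submodule.finrank_sup_add_finrank_inf_eq p q
  rw [hinf] at hsum
  simp only [finrank_bot, add_zero] at hsum
  have htop : finrank ℝ (Euc d) = d := finrank_euclideanSpace_fin
  have : finrank ℝ (p ⊔ q : Submodule ℝ (Euc d)) = finrank ℝ (Euc d) := by omega
  exact ⟨hdisj, codisjoint_iff.mpr (Submodule.eq_top_of_finrank_eq this)⟩

end DSExt

namespace DSExt

variable {d : ℕ}

lemma small_pow {lam : ℝ} (hlam0 : 0 ≤ lam) (hlam1 : lam < 1) (c : ℝ) :
    ∃ N : ℕ, ∀ n ≥ N, c * lam ^ n < 1/2 := by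
  have h0 : Filter.Tendsto (fun n : ℕ => c * lam ^ n) Filter.atTop (𝓝 (c * 0)) :=
    (tendsto_pow_atTop_nhds_zero_of_lt_one hlam0 hlam1).const_mul c
  rw [mul_zero] at h0
  exact Filter.eventually_atTop.mp (h0.eventually (gt_mem_nhds (by norm_num : (0:ℝ) < 1/2)))

set_option maxHeartbeats 1000000 in
lemma splitting_unique_aux {A : ℕ → Euc d →L[ℝ] Euc d}
    (hA : ∀ (n : ℕ) (w : Euc d), w ≠ 0 → A n w ≠ 0)
    {C lam : ℝ} (hC : 0 < C) (hlam0 : 0 < lam) (hlam1 : lam < 1)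
    {E1 F1 E2 F2 : Submodule ℝ (Euc d)}
    (hc1 : IsCompl E1 F1) (hc2 : IsCompl E2 F2)
    (hrk : finrank ℝ E1 = finrank ℝ E2)
    (hd1 : ∀ n, ∀ u ∈ E1, ∀ v ∈ F1, ‖A n u‖ * ‖v‖ ≤ C * lam ^ n * (‖A n v‖ * ‖u‖))
    (hd2 : ∀ n, ∀ u ∈ E2, ∀ v ∈ F2, ‖A n u‖ * ‖v‖ ≤ C * lam ^ n * (‖A n v‖ * ‖u‖)) :
    E1 = E2 := by
  have hApos : ∀ (n : ℕ) (w : Euc d), w ≠ 0 → 0 < ‖A n w‖ := by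
    intro n w hw; exact norm_pos_iff.mpr (hA n w hw)
  have hlam2 : 0 ≤ lam * lam := by positivity
  have hlam2' : lam * lam < 1 := by nlinarith
  have hlampow : ∀ n : ℕ, (0:ℝ) < lam ^ n := fun n => pow_pos hlam0 n
  -- Step 1 : E1 ∩ F2 = 0
  have hEF : ∀ w, w ∈ E1 → w ∈ F2 → w = 0 := by
    intro w hwE hwF
    by_contra hw
    have hWpos : 0 < ‖w‖ := norm_pos_iff.mpr hw
    -- chained domination: E2 dominated by F1 doubly
    have h1a : ∀ n, ∀ u ∈ E2, ∀ v ∈ F1,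
        ‖A n u‖ * ‖v‖ ≤ (C*C) * (lam*lam) ^ n * (‖A n v‖ * ‖u‖) := by
      intro n u hu v hv
      have hi := hd2 n u hu w hwF
      have hii := hd1 n w hwE v hv
      have hbpos : 0 < ‖A n w‖ := hApos n w hw
      have h1 : ‖A n u‖ * ‖w‖ * ‖v‖ ≤ C * lam ^ n * (‖A n w‖ * ‖u‖) * ‖v‖ :=
        mul_le_mul_of_nonneg_right hi (norm_nonneg v)
      have h2 : C * lam ^ n * ‖u‖ * (‖A n w‖ * ‖v‖) ≤
          C * lam ^ n * ‖u‖ * (C * lam ^ n * (‖A n v‖ * ‖w‖)) := by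
        apply mul_le_mul_of_nonneg_left hii
        positivity
      have hfin : ‖A n u‖ * ‖v‖ * ‖w‖ ≤ (C*C) * (lam*lam) ^ n * (‖A n v‖ * ‖u‖) * ‖w‖ := by
        rw [mul_pow]; nlinarith [norm_nonneg (A n u), norm_nonneg v, norm_nonneg u,
          norm_nonneg (A n v)]
      exact le_of_mul_le_mul_right hfin hWpos
    -- E2 ∩ F1 = 0
    have h1b : ∀ z, z ∈ E2 → z ∈ F1 → z = 0 := by
      intro z hz2 hz1
      by_contra hz
      obtain ⟨N, hN⟩ := small_pow hlam2 hlam2' (C*C)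
      have h := h1a N z hz2 z hz1
      have hp : 0 < ‖A N z‖ * ‖z‖ := by
        have := hApos N z hz; have := norm_pos_iff.mpr hz; positivity
      have := hN N le_rfl
      nlinarith
    have hd' : finrank ℝ E1 + finrank ℝ F1 = d := by
      have := Submodule.finrank_add_eq_of_isCompl hc1
      rwa [finrank_euclideanSpace_fin] at this
    have hd2' : finrank ℝ E2 + finrank ℝ F2 = d := by
      have := Submodule.finrank_add_eq_of_isCompl hc2
      rwa [finrank_euclideanSpace_fin] at this
    have h1c : IsCompl E2 F1 := isCompl_of_disjoint_finrank h1b (by omega)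
    -- decompose w
    have hwtop : w ∈ E2 ⊔ F1 := by rw [codisjoint_iff.mp h1c.codisjoint]; trivial
    obtain ⟨p, hp, q, hq, hpq⟩ := Submodule.mem_sup.mp hwtop
    by_cases hq0 : q = 0
    · subst hq0; rw [add_zero] at hpq
      have hwE2 : w ∈ E2 := hpq ▸ hp
      exact hw (Submodule.disjoint_def.mp hc2.disjoint w hwE2 hwF)
    · have hqpos : 0 < ‖q‖ := norm_pos_iff.mpr hq0
      obtain ⟨N1, hN1⟩ := small_pow hlam2 hlam2' (C*C*‖p‖/‖q‖)
      obtain ⟨N2, hN2⟩ := small_pow hlam0.le hlam1 (C*‖w‖/‖q‖)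
      set n := max N1 N2 with hn
      have hqApos : 0 < ‖A n q‖ := hApos n q hq0
      -- bound on ‖A n p‖
      have hsm1 := hN1 n (le_max_left _ _)
      have hsm1' : C*C*‖p‖*(lam*lam)^n < 1/2*‖q‖ := by
        rw [div_mul_eq_mul_div, div_lt_iff₀ hqpos] at hsm1; linarith
      have hb1' : ‖A n p‖ < 1/2 * ‖A n q‖ := by
        have h := h1a n p hp q hq
        nlinarith [mul_lt_mul_of_pos_right hsm1' hqApos, hqpos, h,
          norm_nonneg (A n p), norm_nonneg (A n q)]
      -- bound on ‖A n w‖ from domination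
      have hb2 : ‖A n w‖ < 1/2 * ‖A n q‖ := by
        have h := hd1 n w hwE q hq
        have hsm := hN2 n (le_max_right _ _)
        have : ‖A n w‖ ≤ C * lam ^ n * ‖A n q‖ * ‖w‖ / ‖q‖ := by
          rw [le_div_iff₀ hqpos]; calc ‖A n w‖ * ‖q‖ ≤ C * lam^n * (‖A n q‖ * ‖w‖) := h
            _ = C * lam ^ n * ‖A n q‖ * ‖w‖ := by ring
        calc ‖A n w‖ ≤ C * lam ^ n * ‖A n q‖ * ‖w‖ / ‖q‖ := this
          _ = (C * ‖w‖ / ‖q‖ * lam ^ n) * ‖A n q‖ := by ring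
          _ < 1/2 * ‖A n q‖ := mul_lt_mul_of_pos_right hsm hqApos
      -- but ‖A n w‖ ≥ ‖A n q‖ - ‖A n p‖
      have hwpq : A n w = A n p + A n q := by rw [← hpq, map_add]
      have htri : ‖A n q‖ ≤ ‖A n w‖ + ‖A n p‖ := by
        calc ‖A n q‖ = ‖A n w - A n p‖ := by rw [hwpq]; congr 1; abel
          _ ≤ ‖A n w‖ + ‖A n p‖ := norm_sub_le _ _
      linarith
  -- Step 2 : comparison of F2 vectors with F1 vectors
  have h2 : ∀ v2, v2 ∈ F2 → v2 ≠ 0 → ∃ b, b ∈ F1 ∧ b ≠ 0 ∧ ∃ K, 0 < K ∧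
      ∀ n, ‖A n b‖ ≤ K * ‖A n v2‖ := by
    intro v2 hv2 hv2ne
    have hvtop : v2 ∈ E1 ⊔ F1 := by rw [codisjoint_iff.mp hc1.codisjoint]; trivial
    obtain ⟨a, ha, b, hb, hab⟩ := Submodule.mem_sup.mp hvtop
    have hbne : b ≠ 0 := by
      intro h
      apply hv2ne
      have hv2E : v2 ∈ E1 := by rw [← hab, h, add_zero]; exact ha
      exact hEF v2 hv2E hv2
    have hbpos : 0 < ‖b‖ := norm_pos_iff.mpr hbne
    obtain ⟨N, hN⟩ := small_pow hlam0.le hlam1 (C*‖a‖/‖b‖)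
    have hsum0 : (0:ℝ) ≤ ∑ m ∈ Finset.range N, ‖A m b‖ / ‖A m v2‖ :=
      Finset.sum_nonneg fun m _ => by positivity
    set K := 2 + ∑ m ∈ Finset.range N, ‖A m b‖ / ‖A m v2‖ with hK
    have hKge2 : (2:ℝ) ≤ K := by rw [hK]; linarith
    refine ⟨b, hb, hbne, K, by linarith, ?_⟩
    intro n
    have hv2pos : 0 < ‖A n v2‖ := hApos n v2 hv2ne
    by_cases hcase : N ≤ n
    · -- large n
      have hsm := hN n hcase
      have haA : ‖A n a‖ < 1/2 * ‖A n b‖ := by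
        have h := hd1 n a ha b hb
        have hbApos : 0 < ‖A n b‖ := hApos n b hbne
        have : ‖A n a‖ ≤ C * lam ^ n * ‖A n b‖ * ‖a‖ / ‖b‖ := by
          rw [le_div_iff₀ hbpos]
          calc ‖A n a‖ * ‖b‖ ≤ C * lam^n * (‖A n b‖ * ‖a‖) := h
            _ = C * lam ^ n * ‖A n b‖ * ‖a‖ := by ring
        calc ‖A n a‖ ≤ C * lam ^ n * ‖A n b‖ * ‖a‖ / ‖b‖ := this
          _ = (C * ‖a‖ / ‖b‖ * lam ^ n) * ‖A n b‖ := by ring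
          _ < 1/2 * ‖A n b‖ := mul_lt_mul_of_pos_right hsm hbApos
      have hvab : A n v2 = A n a + A n b := by rw [← hab, map_add]
      have htri : ‖A n b‖ ≤ ‖A n v2‖ + ‖A n a‖ := by
        calc ‖A n b‖ = ‖A n v2 - A n a‖ := by rw [hvab]; congr 1; abel
          _ ≤ ‖A n v2‖ + ‖A n a‖ := norm_sub_le _ _
      have : ‖A n b‖ ≤ 2 * ‖A n v2‖ := by linarith
      calc ‖A n b‖ ≤ 2 * ‖A n v2‖ := this
        _ ≤ K * ‖A n v2‖ := mul_le_mul_of_nonneg_right hKge2 hv2pos.le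
    · -- small n : ratio is a term of the sum
      push_neg at hcase
      have hterm : ‖A n b‖ / ‖A n v2‖ ≤ K := by
        have h1 : ‖A n b‖ / ‖A n v2‖ ≤ ∑ m ∈ Finset.range N, ‖A m b‖ / ‖A m v2‖ :=
          Finset.single_le_sum (f := fun m => ‖A m b‖ / ‖A m v2‖)
            (fun m _ => by positivity) (Finset.mem_range.mpr hcase)
        linarith
      calc ‖A n b‖ = ‖A n b‖ / ‖A n v2‖ * ‖A n v2‖ := by field_simp
        _ ≤ K * ‖A n v2‖ := mul_le_mul_of_nonneg_right hterm hv2pos.le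
  -- Step 3 : E1 ≤ E2
  have hle : E1 ≤ E2 := by
    intro u hu
    by_cases hu0 : u = 0
    · subst hu0; exact E2.zero_mem
    have hutop : u ∈ E2 ⊔ F2 := by rw [codisjoint_iff.mp hc2.codisjoint]; trivial
    obtain ⟨a2, ha2, b2, hb2, hab2⟩ := Submodule.mem_sup.mp hutop
    by_cases hb20 : b2 = 0
    · subst hb20; rw [add_zero] at hab2; subst hab2; exact ha2
    exfalso
    obtain ⟨b, hbF1, hbne, K, hKpos, hKb⟩ := h2 b2 hb2 hb20
    have hbpos : 0 < ‖b‖ := norm_pos_iff.mpr hbne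
    have hb2pos : 0 < ‖b2‖ := norm_pos_iff.mpr hb20
    obtain ⟨N1, hN1⟩ := small_pow hlam0.le hlam1 (C*‖a2‖/‖b2‖)
    obtain ⟨N2, hN2⟩ := small_pow hlam0.le hlam1 (2*C*K*‖u‖/‖b‖)
    set n := max N1 N2 with hn
    have hb2Apos : 0 < ‖A n b2‖ := hApos n b2 hb20
    -- lower bound for ‖A n u‖
    have haA : ‖A n a2‖ < 1/2 * ‖A n b2‖ := by
      have h := hd2 n a2 ha2 b2 hb2
      have hsm := hN1 n (le_max_left _ _)
      have : ‖A n a2‖ ≤ C * lam ^ n * ‖A n b2‖ * ‖a2‖ / ‖b2‖ := by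
        rw [le_div_iff₀ hb2pos]
        calc ‖A n a2‖ * ‖b2‖ ≤ C * lam^n * (‖A n b2‖ * ‖a2‖) := h
          _ = C * lam ^ n * ‖A n b2‖ * ‖a2‖ := by ring
      calc ‖A n a2‖ ≤ C * lam ^ n * ‖A n b2‖ * ‖a2‖ / ‖b2‖ := this
        _ = (C * ‖a2‖ / ‖b2‖ * lam ^ n) * ‖A n b2‖ := by ring
        _ < 1/2 * ‖A n b2‖ := mul_lt_mul_of_pos_right hsm hb2Apos
    have hvab : A n u = A n a2 + A n b2 := by rw [← hab2, map_add]
    have hlow : 1/2 * ‖A n b2‖ ≤ ‖A n u‖ := by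
      have htri : ‖A n b2‖ ≤ ‖A n u‖ + ‖A n a2‖ := by
        calc ‖A n b2‖ = ‖A n u - A n a2‖ := by rw [hvab]; congr 1; abel
          _ ≤ ‖A n u‖ + ‖A n a2‖ := norm_sub_le _ _
      linarith
    -- upper bound for ‖A n u‖
    have hup : ‖A n u‖ * ‖b‖ ≤ C * lam ^ n * K * ‖A n b2‖ * ‖u‖ := by
      have h := hd1 n u hu b hbF1
      calc ‖A n u‖ * ‖b‖ ≤ C * lam^n * (‖A n b‖ * ‖u‖) := h
        _ ≤ C * lam^n * (K * ‖A n b2‖ * ‖u‖) := by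
            apply mul_le_mul_of_nonneg_left _ (by positivity)
            exact mul_le_mul_of_nonneg_right (hKb n) (norm_nonneg u)
        _ = C * lam ^ n * K * ‖A n b2‖ * ‖u‖ := by ring
    have hsm := hN2 n (le_max_right _ _)
    -- combine
    have h1 : 1/2 * ‖A n b2‖ * ‖b‖ ≤ C * lam ^ n * K * ‖A n b2‖ * ‖u‖ :=
      le_trans (mul_le_mul_of_nonneg_right hlow hbpos.le) hup
    have h2' : 2*C*K*‖u‖/‖b‖ * lam ^ n < 1/2 := hsm
    have hfin : C * lam ^ n * K * ‖A n b2‖ * ‖u‖ < 1/2 * ‖A n b2‖ * ‖b‖ := by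
      have hb' : 2*C*K*‖u‖ * lam ^ n < 1/2 * ‖b‖ := by
        rw [div_mul_eq_mul_div, div_lt_iff₀ hbpos] at h2'; linarith
      have h3 := mul_lt_mul_of_pos_right hb' hb2Apos
      have h4 := mul_pos hbpos hb2Apos
      nlinarith [h3, h4]
    linarith
  exact Submodule.eq_of_le_of_finrank_eq hle hrk

end DSExt

namespace DSExt

lemma projSub_opNorm {d : ℕ} (V : Submodule ℝ (Euc d)) : ‖projSub V‖ ≤ 1 :=
  ContinuousLinearMap.opNorm_le_bound _ zero_le_one
    (fun u => by simpa using projSub_norm_apply_le V u)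

end DSExt


open DSExt Filter Module Topology

set_option maxHeartbeats 4000000

/-- A (not necessarily continuous) dominated splitting on an invariant set
with compact closure extends to a genuine (continuous) dominated splitting on the closure,
with the same constants and index; moreover the closure is invariant. -/
theorem dominated_splitting_extends_to_closure
    {d : ℕ} (hd : 1 ≤ d) (f : Euc d → Euc d) (hf : IsC1Diffeo f)
    (Λ₀ : Set (Euc d)) (hinv : f '' Λ₀ = Λ₀) (hcpt : IsCompact (closure Λ₀))
    (E F : Euc d → Submodule ℝ (Euc d)) (i : ℕ)
    (hcompl : ∀ x ∈ Λ₀, IsCompl (E x) (F x))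
    (hdim : ∀ x ∈ Λ₀, Module.finrank ℝ (E x) = i)
    (hEinv : ∀ x ∈ Λ₀, (E x).map ((fderiv ℝ f x : Euc d →ₗ[ℝ] Euc d)) = E (f x))
    (hFinv : ∀ x ∈ Λ₀, (F x).map ((fderiv ℝ f x : Euc d →ₗ[ℝ] Euc d)) = F (f x))
    (C lam : ℝ) (hC : 0 < C) (hlam0 : 0 < lam) (hlam1 : lam < 1)
    (hdom : DomIneq f Λ₀ E F C lam) :
    f '' (closure Λ₀) = closure Λ₀ ∧
    ∃ Ebar Fbar : Euc d → Submodule ℝ (Euc d),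
      (∀ x ∈ Λ₀, Ebar x = E x ∧ Fbar x = F x) ∧
      IsDomSplitting f (closure Λ₀) Ebar Fbar C lam ∧
      (∀ x ∈ closure Λ₀, Module.finrank ℝ (Ebar x) = i) := by
  obtain ⟨hbij, hfC1, g, hgC1, hgl, hgr⟩ := hf
  have hfd : Differentiable ℝ f := hfC1.differentiable one_ne_zero
  have hgd : Differentiable ℝ g := hgC1.differentiable one_ne_zero
  have hfc : Continuous f := hfC1.continuous
  -- closure is invariant
  have hclos : f '' (closure Λ₀) = closure Λ₀ := by
    apply le_antisymm
    · calc f '' (closure Λ₀) ⊆ closure (f '' Λ₀) := image_closure_subset_closure_image hfc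
        _ = closure Λ₀ := by rw [hinv]
    · apply closure_minimal _ ((hcpt.image hfc).isClosed)
      calc Λ₀ = f '' Λ₀ := hinv.symm
        _ ⊆ f '' (closure Λ₀) := Set.image_mono subset_closure
  -- iterates are C¹
  have hiterC1 : ∀ n : ℕ, ContDiff ℝ 1 (f^[n]) := by
    intro n; induction n with
    | zero => simpa [Function.iterate_zero] using contDiff_id
    | succ n ih => rw [Function.iterate_succ']; exact hfC1.comp ih
  have hgiterC1 : ∀ n : ℕ, ContDiff ℝ 1 (g^[n]) := by
    intro n; induction n with
    | zero => simpa [Function.iterate_zero] using contDiff_id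
    | succ n ih => rw [Function.iterate_succ']; exact hgC1.comp ih
  have hiterd : ∀ (n : ℕ) (x : Euc d), DifferentiableAt ℝ (f^[n]) x :=
    fun n x => ((hiterC1 n).differentiable one_ne_zero) x
  have hgiterd : ∀ (n : ℕ) (x : Euc d), DifferentiableAt ℝ (g^[n]) x :=
    fun n x => ((hgiterC1 n).differentiable one_ne_zero) x
  -- chain rule for iterates
  have hchain : ∀ (n : ℕ) (x : Euc d),
      fderiv ℝ (f^[n+1]) x = (fderiv ℝ f (f^[n] x)).comp (fderiv ℝ (f^[n]) x) := by
    intro n x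
    rw [Function.iterate_succ']
    exact fderiv_comp x (hfd _) (hiterd n x)
  -- inverse compositions
  have hinvcomp : ∀ (n : ℕ) (x : Euc d),
      (fderiv ℝ (g^[n]) (f^[n] x)).comp (fderiv ℝ (f^[n]) x) =
        ContinuousLinearMap.id ℝ (Euc d) := by
    intro n x
    have h1 : (g^[n]) ∘ (f^[n]) = id := funext (hgl.iterate n)
    have h2 := fderiv_comp x (hgiterd n (f^[n] x)) (hiterd n x)
    rw [h1, fderiv_id] at h2
    exact h2.symm
  have hinvcomp' : ∀ (n : ℕ) (x : Euc d),
      (fderiv ℝ (f^[n]) (g^[n] x)).comp (fderiv ℝ (g^[n]) x) =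
        ContinuousLinearMap.id ℝ (Euc d) := by
    intro n x
    have h1 : (f^[n]) ∘ (g^[n]) = id := funext ((Function.LeftInverse.iterate hgr n))
    have h2 := fderiv_comp x (hiterd n (g^[n] x)) (hgiterd n x)
    rw [h1, fderiv_id] at h2
    exact h2.symm
  -- injectivity of derivative cocycles
  have hAinj : ∀ (n : ℕ) (x : Euc d) (w : Euc d), w ≠ 0 → fderiv ℝ (f^[n]) x w ≠ 0 := by
    intro n x w hw hcon
    apply hw
    have := congrArg (fun T : Euc d →L[ℝ] Euc d => T w) (hinvcomp n x)
    simp only [ContinuousLinearMap.comp_apply, ContinuousLinearMap.id_apply] at this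
    rw [← this, hcon, map_zero]
  have hBinj : ∀ (n : ℕ) (x : Euc d) (w : Euc d), w ≠ 0 → fderiv ℝ (g^[n]) x w ≠ 0 := by
    intro n x w hw hcon
    apply hw
    have := congrArg (fun T : Euc d →L[ℝ] Euc d => T w) (hinvcomp' n x)
    simp only [ContinuousLinearMap.comp_apply, ContinuousLinearMap.id_apply] at this
    rw [← this, hcon, map_zero]
  -- orbits
  have hfmem : ∀ x ∈ Λ₀, f x ∈ Λ₀ := by
    intro x hx; rw [← hinv]; exact Set.mem_image_of_mem f hx
  have hginvset : g '' Λ₀ = Λ₀ := by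
    conv_lhs => rw [← hinv]
    rw [← Set.image_comp]
    have : g ∘ f = id := funext hgl
    rw [this, Set.image_id]
  have hgmem : ∀ x ∈ Λ₀, g x ∈ Λ₀ := by
    intro x hx; rw [← hginvset]; exact Set.mem_image_of_mem g hx
  have hforb : ∀ (n : ℕ), ∀ x ∈ Λ₀, f^[n] x ∈ Λ₀ := by
    intro n; induction n with
    | zero => intro x hx; simpa using hx
    | succ n ih => intro x hx; rw [Function.iterate_succ_apply']; exact hfmem _ (ih x hx)
  have hgorb : ∀ (n : ℕ), ∀ x ∈ Λ₀, g^[n] x ∈ Λ₀ := by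
    intro n; induction n with
    | zero => intro x hx; simpa using hx
    | succ n ih => intro x hx; rw [Function.iterate_succ_apply']; exact hgmem _ (ih x hx)
  -- map composition helper
  have hmapcomp : ∀ (S T : Euc d →L[ℝ] Euc d) (p : Submodule ℝ (Euc d)),
      p.map ((S.comp T : Euc d →L[ℝ] Euc d) : Euc d →ₗ[ℝ] Euc d) =
        (p.map (T : Euc d →ₗ[ℝ] Euc d)).map (S : Euc d →ₗ[ℝ] Euc d) := by
    intro S T p
    ext w
    simp [Submodule.mem_map, ContinuousLinearMap.comp_apply]
  have hmapid : ∀ p : Submodule ℝ (Euc d),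
      p.map ((ContinuousLinearMap.id ℝ (Euc d) : Euc d →L[ℝ] Euc d) : Euc d →ₗ[ℝ] Euc d) = p := by
    intro p; ext w; simp [Submodule.mem_map]
  -- iterated invariance of E and F, forward
  have hEit : ∀ (n : ℕ), ∀ x ∈ Λ₀, (E x).map ((fderiv ℝ (f^[n]) x : Euc d →ₗ[ℝ] Euc d)) = E (f^[n] x) := by
    intro n; induction n with
    | zero =>
      intro x hx
      have h0 : f^[0] = (id : Euc d → Euc d) := Function.iterate_zero f
      rw [h0, fderiv_id, hmapid]; rfl
    | succ n ih =>
      intro x hx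
      rw [hchain n x, hmapcomp, ih x hx, Function.iterate_succ_apply']
      exact hEinv _ (hforb n x hx)
  have hFit : ∀ (n : ℕ), ∀ x ∈ Λ₀, (F x).map ((fderiv ℝ (f^[n]) x : Euc d →ₗ[ℝ] Euc d)) = F (f^[n] x) := by
    intro n; induction n with
    | zero =>
      intro x hx
      have h0 : f^[0] = (id : Euc d → Euc d) := Function.iterate_zero f
      rw [h0, fderiv_id, hmapid]; rfl
    | succ n ih =>
      intro x hx
      rw [hchain n x, hmapcomp, ih x hx, Function.iterate_succ_apply']
      exact hFinv _ (hforb n x hx)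
  -- invariance under iterates of g
  have hEgit : ∀ (n : ℕ), ∀ x ∈ Λ₀, (E x).map ((fderiv ℝ (g^[n]) x : Euc d →ₗ[ℝ] Euc d)) = E (g^[n] x) := by
    intro n x hx
    have hy : g^[n] x ∈ Λ₀ := hgorb n x hx
    have h1 : (E (g^[n] x)).map ((fderiv ℝ (f^[n]) (g^[n] x) : Euc d →ₗ[ℝ] Euc d)) = E x := by
      rw [hEit n _ hy]
      congr 1
      exact Function.LeftInverse.iterate hgr n x
    calc (E x).map ((fderiv ℝ (g^[n]) x : Euc d →ₗ[ℝ] Euc d))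
        = ((E (g^[n] x)).map ((fderiv ℝ (f^[n]) (g^[n] x) : Euc d →ₗ[ℝ] Euc d))).map ((fderiv ℝ (g^[n]) x : Euc d →ₗ[ℝ] Euc d)) := by
          rw [h1]
      _ = (E (g^[n] x)).map ((((fderiv ℝ (g^[n]) x).comp (fderiv ℝ (f^[n]) (g^[n] x)) : Euc d →L[ℝ] Euc d) : Euc d →ₗ[ℝ] Euc d)) := by
          rw [hmapcomp]
      _ = E (g^[n] x) := by
          have hx' : f^[n] (g^[n] x) = x := Function.LeftInverse.iterate hgr n x
          have := hinvcomp n (g^[n] x)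
          rw [hx'] at this
          rw [this, hmapid]
  have hFgit : ∀ (n : ℕ), ∀ x ∈ Λ₀, (F x).map ((fderiv ℝ (g^[n]) x : Euc d →ₗ[ℝ] Euc d)) = F (g^[n] x) := by
    intro n x hx
    have hy : g^[n] x ∈ Λ₀ := hgorb n x hx
    have h1 : (F (g^[n] x)).map ((fderiv ℝ (f^[n]) (g^[n] x) : Euc d →ₗ[ℝ] Euc d)) = F x := by
      rw [hFit n _ hy]
      congr 1
      exact Function.LeftInverse.iterate hgr n x
    calc (F x).map ((fderiv ℝ (g^[n]) x : Euc d →ₗ[ℝ] Euc d))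
        = ((F (g^[n] x)).map ((fderiv ℝ (f^[n]) (g^[n] x) : Euc d →ₗ[ℝ] Euc d))).map ((fderiv ℝ (g^[n]) x : Euc d →ₗ[ℝ] Euc d)) := by
          rw [h1]
      _ = (F (g^[n] x)).map ((((fderiv ℝ (g^[n]) x).comp (fderiv ℝ (f^[n]) (g^[n] x)) : Euc d →L[ℝ] Euc d) : Euc d →ₗ[ℝ] Euc d)) := by
          rw [hmapcomp]
      _ = F (g^[n] x) := by
          have hx' : f^[n] (g^[n] x) = x := Function.LeftInverse.iterate hgr n x
          have := hinvcomp n (g^[n] x)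
          rw [hx'] at this
          rw [this, hmapid]
  -- product form of forward domination on Λ₀
  have hdomA : ∀ x ∈ Λ₀, ∀ (n : ℕ), ∀ u ∈ E x, ∀ v ∈ F x,
      ‖fderiv ℝ (f^[n]) x u‖ * ‖v‖ ≤ C * lam ^ n * (‖fderiv ℝ (f^[n]) x v‖ * ‖u‖) := by
    intro x hx n u hu v hv
    by_cases hu0 : u = 0
    · subst hu0; simp
    by_cases hv0 : v = 0
    · subst hv0; simp
    have h := hdom x hx n u hu hu0 v hv hv0
    have hupos : 0 < ‖u‖ := norm_pos_iff.mpr hu0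
    have hvpos : 0 < ‖v‖ := norm_pos_iff.mpr hv0
    rw [mul_div_assoc' (C * lam ^ n), div_le_div_iff₀ hupos hvpos] at h
    linear_combination h
  -- product form of backward domination on Λ₀
  have hdomB : ∀ x ∈ Λ₀, ∀ (n : ℕ), ∀ u ∈ E x, ∀ v ∈ F x,
      ‖fderiv ℝ (g^[n]) x v‖ * ‖u‖ ≤ C * lam ^ n * (‖fderiv ℝ (g^[n]) x u‖ * ‖v‖) := by
    intro x hx n u hu v hv
    by_cases hu0 : u = 0
    · subst hu0; simp
    by_cases hv0 : v = 0
    · subst hv0; simp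
    have hy : g^[n] x ∈ Λ₀ := hgorb n x hx
    have hu' : fderiv ℝ (g^[n]) x u ∈ E (g^[n] x) := by
      rw [← hEgit n x hx]; exact Submodule.mem_map_of_mem hu
    have hv' : fderiv ℝ (g^[n]) x v ∈ F (g^[n] x) := by
      rw [← hFgit n x hx]; exact Submodule.mem_map_of_mem hv
    have hu'0 : fderiv ℝ (g^[n]) x u ≠ 0 := hBinj n x u hu0
    have hv'0 : fderiv ℝ (g^[n]) x v ≠ 0 := hBinj n x v hv0
    have h := hdom _ hy n _ hu' hu'0 _ hv' hv'0
    have hback : ∀ w : Euc d, fderiv ℝ (f^[n]) (g^[n] x) (fderiv ℝ (g^[n]) x w) = w := by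
      intro w
      have := congrArg (fun T : Euc d →L[ℝ] Euc d => T w) (hinvcomp' n x)
      simpa using this
    rw [hback u, hback v] at h
    have hu'pos : 0 < ‖fderiv ℝ (g^[n]) x u‖ := norm_pos_iff.mpr hu'0
    have hv'pos : 0 < ‖fderiv ℝ (g^[n]) x v‖ := norm_pos_iff.mpr hv'0
    rw [mul_div_assoc' (C * lam ^ n), div_le_div_iff₀ hu'pos hv'pos] at h
    linear_combination h
  -- uniform bound on derivatives over the closure
  obtain ⟨M1, hM1⟩ := hcpt.exists_bound_of_continuousOn
    ((hfC1.continuous_fderiv one_ne_zero).continuousOn (s := closure Λ₀))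
  obtain ⟨M2, hM2⟩ := hcpt.exists_bound_of_continuousOn
    ((hgC1.continuous_fderiv one_ne_zero).continuousOn (s := closure Λ₀))
  set M : ℝ := max 1 (max M1 M2) with hM
  have hMone : (1:ℝ) ≤ M := le_max_left _ _
  have hMpos : (0:ℝ) < M := lt_of_lt_of_le one_pos hMone
  have hMf : ∀ x ∈ Λ₀, ‖fderiv ℝ f x‖ ≤ M := fun x hx =>
    le_trans (hM1 x (subset_closure hx)) (le_trans (le_max_left _ _) (le_max_right _ _))
  have hMg : ∀ x ∈ Λ₀, ‖fderiv ℝ g x‖ ≤ M := fun x hx =>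
    le_trans (hM2 x (subset_closure hx)) (le_trans (le_max_right _ _) (le_max_right _ _))
  -- growth bounds on iterates over Λ₀
  have hAgrow : ∀ (n : ℕ), ∀ x ∈ Λ₀, ‖fderiv ℝ (f^[n]) x‖ ≤ M ^ n := by
    intro n; induction n with
    | zero =>
      intro x hx
      have h0 : f^[0] = (id : Euc d → Euc d) := Function.iterate_zero f
      rw [h0, fderiv_id, pow_zero]
      exact ContinuousLinearMap.norm_id_le
    | succ n ih =>
      intro x hx
      rw [hchain n x, pow_succ]
      calc ‖(fderiv ℝ f (f^[n] x)).comp (fderiv ℝ (f^[n]) x)‖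
          ≤ ‖fderiv ℝ f (f^[n] x)‖ * ‖fderiv ℝ (f^[n]) x‖ := ContinuousLinearMap.opNorm_comp_le _ _
        _ ≤ M * M ^ n := by
            apply mul_le_mul (hMf _ (hforb n x hx)) (ih x hx) (norm_nonneg _) hMpos.le
        _ = M ^ n * M := by ring
  have hgchain : ∀ (n : ℕ) (x : Euc d),
      fderiv ℝ (g^[n+1]) x = (fderiv ℝ g (g^[n] x)).comp (fderiv ℝ (g^[n]) x) := by
    intro n x
    rw [Function.iterate_succ']
    exact fderiv_comp x (hgd _) (hgiterd n x)
  have hBgrow : ∀ (n : ℕ), ∀ x ∈ Λ₀, ‖fderiv ℝ (g^[n]) x‖ ≤ M ^ n := by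
    intro n; induction n with
    | zero =>
      intro x hx
      have h0 : g^[0] = (id : Euc d → Euc d) := Function.iterate_zero g
      rw [h0, fderiv_id, pow_zero]
      exact ContinuousLinearMap.norm_id_le
    | succ n ih =>
      intro x hx
      rw [hgchain n x, pow_succ]
      calc ‖(fderiv ℝ g (g^[n] x)).comp (fderiv ℝ (g^[n]) x)‖
          ≤ ‖fderiv ℝ g (g^[n] x)‖ * ‖fderiv ℝ (g^[n]) x‖ := ContinuousLinearMap.opNorm_comp_le _ _
        _ ≤ M * M ^ n := by
            apply mul_le_mul (hMg _ (hgorb n x hx)) (ih x hx) (norm_nonneg _) hMpos.le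
        _ = M ^ n * M := by ring
  -- conorm bound : ‖v‖ ≤ M^n * ‖D f^[n] v‖ on Λ₀
  have hconorm : ∀ (n : ℕ), ∀ x ∈ Λ₀, ∀ v : Euc d,
      ‖v‖ ≤ M ^ n * ‖fderiv ℝ (f^[n]) x v‖ := by
    intro n x hx v
    have h1 : fderiv ℝ (g^[n]) (f^[n] x) (fderiv ℝ (f^[n]) x v) = v := by
      have := congrArg (fun T : Euc d →L[ℝ] Euc d => T v) (hinvcomp n x)
      simpa using this
    calc ‖v‖ = ‖fderiv ℝ (g^[n]) (f^[n] x) (fderiv ℝ (f^[n]) x v)‖ := by rw [h1]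
      _ ≤ ‖fderiv ℝ (g^[n]) (f^[n] x)‖ * ‖fderiv ℝ (f^[n]) x v‖ :=
          ContinuousLinearMap.le_opNorm _ _
      _ ≤ M ^ n * ‖fderiv ℝ (f^[n]) x v‖ :=
          mul_le_mul_of_nonneg_right (hBgrow n _ (hforb n x hx)) (norm_nonneg _)
  -- uniform transversality on Λ₀
  obtain ⟨N₀, hN₀⟩ := DSExt.small_pow hlam0.le hlam1 C
  set eps : ℝ := (2 * (M ^ N₀ * M ^ N₀))⁻¹ with heps
  have hepspos : 0 < eps := by rw [heps]; positivity
  have htrans : ∀ x ∈ Λ₀, ∀ u ∈ E x, ∀ v ∈ F x, ‖u‖ = 1 → ‖v‖ = 1 →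
      eps ≤ ‖u - v‖ := by
    intro x hx u hu v hv hun hvn
    have hv0 : v ≠ 0 := by intro h; rw [h] at hvn; simp at hvn
    have hAv : 0 < ‖fderiv ℝ (f^[N₀]) x v‖ := norm_pos_iff.mpr (hAinj N₀ x v hv0)
    have hdomuv := hdomA x hx N₀ u hu v hv
    rw [hun, hvn, mul_one, mul_one] at hdomuv
    have hsm := hN₀ N₀ le_rfl
    have hAu : ‖fderiv ℝ (f^[N₀]) x u‖ < 1/2 * ‖fderiv ℝ (f^[N₀]) x v‖ := by
      calc ‖fderiv ℝ (f^[N₀]) x u‖ ≤ C * lam ^ N₀ * ‖fderiv ℝ (f^[N₀]) x v‖ := hdomuv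
        _ < 1/2 * ‖fderiv ℝ (f^[N₀]) x v‖ := by
            apply mul_lt_mul_of_pos_right _ hAv
            calc C * lam ^ N₀ = C * lam ^ N₀ := rfl
              _ < 1/2 := hsm
    have hlow : M ^ N₀ * ‖fderiv ℝ (f^[N₀]) x v‖ ≥ 1 := by
      have := hconorm N₀ x hx v; rw [hvn] at this; linarith
    have hdiff : ‖fderiv ℝ (f^[N₀]) x v - fderiv ℝ (f^[N₀]) x u‖ ≤ M ^ N₀ * ‖u - v‖ := by
      calc ‖fderiv ℝ (f^[N₀]) x v - fderiv ℝ (f^[N₀]) x u‖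
          = ‖fderiv ℝ (f^[N₀]) x (v - u)‖ := by rw [map_sub]
        _ ≤ ‖fderiv ℝ (f^[N₀]) x‖ * ‖v - u‖ := ContinuousLinearMap.le_opNorm _ _
        _ ≤ M ^ N₀ * ‖v - u‖ :=
            mul_le_mul_of_nonneg_right (hAgrow N₀ x hx) (norm_nonneg _)
        _ = M ^ N₀ * ‖u - v‖ := by rw [norm_sub_rev]
    have htri : ‖fderiv ℝ (f^[N₀]) x v‖ ≤
        ‖fderiv ℝ (f^[N₀]) x v - fderiv ℝ (f^[N₀]) x u‖ + ‖fderiv ℝ (f^[N₀]) x u‖ := by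
      have := norm_sub_le (fderiv ℝ (f^[N₀]) x v - fderiv ℝ (f^[N₀]) x u)
        (- fderiv ℝ (f^[N₀]) x u)
      calc ‖fderiv ℝ (f^[N₀]) x v‖
          = ‖(fderiv ℝ (f^[N₀]) x v - fderiv ℝ (f^[N₀]) x u) + fderiv ℝ (f^[N₀]) x u‖ := by
            congr 1; abel
        _ ≤ _ := norm_add_le _ _
    -- combine : 1/2 ‖Av‖ ≤ M^N₀ ‖u - v‖ and 1 ≤ M^N₀ ‖Av‖
    have hMN : (0:ℝ) < M ^ N₀ := pow_pos hMpos N₀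
    have h1 : 1/2 * ‖fderiv ℝ (f^[N₀]) x v‖ ≤ M ^ N₀ * ‖u - v‖ := by linarith
    have h2 : 1 ≤ 2 * (M ^ N₀ * M ^ N₀) * ‖u - v‖ := by nlinarith
    rw [heps, inv_le_iff_one_le_mul₀ (by positivity)]
    linarith [h2]
  -- compactness: extraction of convergent subsequences of projections
  have hex : ∀ (z : ℕ → Euc d), (∀ k, z k ∈ Λ₀) →
      ∃ (E' F' : Submodule ℝ (Euc d)) (φ : ℕ → ℕ), StrictMono φ ∧
        Tendsto (fun k => projSub (E (z (φ k)))) atTop (𝓝 (projSub E')) ∧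
        Tendsto (fun k => projSub (F (z (φ k)))) atTop (𝓝 (projSub F')) := by
    intro z hz
    have hball : IsCompact (Metric.closedBall (0 : Euc d →L[ℝ] Euc d) 1) := by
      haveI : ProperSpace (Euc d →L[ℝ] Euc d) := FiniteDimensional.proper ℝ _
      exact isCompact_closedBall _ _
    have hmemE : ∀ k, projSub (E (z k)) ∈ Metric.closedBall (0 : Euc d →L[ℝ] Euc d) 1 := by
      intro k; rw [Metric.mem_closedBall, dist_zero_right]; exact projSub_opNorm _
    obtain ⟨P, _, φ1, hφ1, hP⟩ := hball.tendsto_subseq hmemE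
    have hmemF : ∀ k, projSub (F (z (φ1 k))) ∈ Metric.closedBall (0 : Euc d →L[ℝ] Euc d) 1 := by
      intro k; rw [Metric.mem_closedBall, dist_zero_right]; exact projSub_opNorm _
    obtain ⟨Q, _, φ2, hφ2, hQ⟩ := hball.tendsto_subseq hmemF
    set φ := φ1 ∘ φ2 with hφ
    have hφmono : StrictMono φ := hφ1.comp hφ2
    have hPE : Tendsto (fun k => projSub (E (z (φ k)))) atTop (𝓝 P) :=
      hP.comp hφ2.tendsto_atTop
    have hQF : Tendsto (fun k => projSub (F (z (φ k)))) atTop (𝓝 Q) := hQ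
    have hPeq := proj_of_tendsto hPE
    have hQeq := proj_of_tendsto hQF
    exact ⟨_, _, φ, hφmono, hPeq ▸ hPE, hQeq ▸ hQF⟩
  -- properties of admissible limits
  have hlim : ∀ (x : Euc d) (z : ℕ → Euc d) (E' F' : Submodule ℝ (Euc d)),
      (∀ k, z k ∈ Λ₀) → Tendsto z atTop (𝓝 x) →
      Tendsto (fun k => projSub (E (z k))) atTop (𝓝 (projSub E')) →
      Tendsto (fun k => projSub (F (z k))) atTop (𝓝 (projSub F')) →
      (finrank ℝ E' = i ∧ finrank ℝ F' = d - i) ∧ IsCompl E' F' ∧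
      (∀ n : ℕ, ∀ u ∈ E', ∀ v ∈ F',
        ‖fderiv ℝ (f^[n]) x u‖ * ‖v‖ ≤ C * lam ^ n * (‖fderiv ℝ (f^[n]) x v‖ * ‖u‖)) ∧
      (∀ n : ℕ, ∀ u ∈ E', ∀ v ∈ F',
        ‖fderiv ℝ (g^[n]) x v‖ * ‖u‖ ≤ C * lam ^ n * (‖fderiv ℝ (g^[n]) x u‖ * ‖v‖)) := by
    intro x z E' F' hz hzx hPE hPF
    have hile : i ≤ d := by
      have h1 := hdim (z 0) (hz 0)
      have h2 : finrank ℝ (E (z 0)) ≤ finrank ℝ (Euc d) := (E (z 0)).finrank_le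
      rw [finrank_euclideanSpace_fin] at h2; omega
    have hrkF : ∀ k, finrank ℝ (F (z k)) = d - i := by
      intro k
      have h1 := Submodule.finrank_add_eq_of_isCompl (hcompl (z k) (hz k))
      rw [finrank_euclideanSpace_fin] at h1
      have h2 := hdim (z k) (hz k)
      omega
    -- ranks
    have hrkE' : finrank ℝ E' = i := by
      have hev : ∀ᶠ k in atTop, projSub (E (z k)) ∈ Metric.ball (projSub E') 1 :=
        hPE.eventually (Metric.ball_mem_nhds _ one_pos)
      obtain ⟨k, hk⟩ := hev.exists
      rw [Metric.mem_ball, dist_eq_norm] at hk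
      have h2 := finrank_eq_of_proj_close (by rwa [norm_sub_rev] at hk :
        ‖projSub E' - projSub (E (z k))‖ < 1)
      rw [h2]; exact hdim (z k) (hz k)
    have hrkF' : finrank ℝ F' = d - i := by
      have hev : ∀ᶠ k in atTop, projSub (F (z k)) ∈ Metric.ball (projSub F') 1 :=
        hPF.eventually (Metric.ball_mem_nhds _ one_pos)
      obtain ⟨k, hk⟩ := hev.exists
      rw [Metric.mem_ball, dist_eq_norm] at hk
      have h2 := finrank_eq_of_proj_close (by rwa [norm_sub_rev] at hk :
        ‖projSub F' - projSub (F (z k))‖ < 1)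
      rw [h2]; exact hrkF k
    -- disjointness via transversality
    have hdisj : ∀ w, w ∈ E' → w ∈ F' → w = 0 := by
      intro w hwE hwF
      by_contra hw
      have hwpos : 0 < ‖w‖ := norm_pos_iff.mpr hw
      set wh : Euc d := ‖w‖⁻¹ • w with hwh
      have hwhE : wh ∈ E' := E'.smul_mem _ hwE
      have hwhF : wh ∈ F' := F'.smul_mem _ hwF
      have hwh1 : ‖wh‖ = 1 := norm_smul_inv_norm hw
      set u : ℕ → Euc d := fun k => projSub (E (z k)) wh with hu
      set v : ℕ → Euc d := fun k => projSub (F (z k)) wh with hv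
      have huw : Tendsto u atTop (𝓝 wh) := tendsto_proj_apply hPE hwhE
      have hvw : Tendsto v atTop (𝓝 wh) := tendsto_proj_apply hPF hwhF
      have hun : Tendsto (fun k => ‖u k‖) atTop (𝓝 1) := by
        have := huw.norm; rwa [hwh1] at this
      have hvn : Tendsto (fun k => ‖v k‖) atTop (𝓝 1) := by
        have := hvw.norm; rwa [hwh1] at this
      have huev : ∀ᶠ k in atTop, (0:ℝ) < ‖u k‖ :=
        hun.eventually (eventually_gt_nhds one_pos)
      have hvev : ∀ᶠ k in atTop, (0:ℝ) < ‖v k‖ :=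
        hvn.eventually (eventually_gt_nhds one_pos)
      -- normalized sequences
      have hulim : Tendsto (fun k => ‖u k‖⁻¹ • u k) atTop (𝓝 wh) := by
        have h1 : Tendsto (fun k => ‖u k‖⁻¹) atTop (𝓝 1⁻¹) := hun.inv₀ one_ne_zero
        rw [inv_one] at h1
        have := h1.smul huw
        rwa [one_smul] at this
      have hvlim : Tendsto (fun k => ‖v k‖⁻¹ • v k) atTop (𝓝 wh) := by
        have h1 : Tendsto (fun k => ‖v k‖⁻¹) atTop (𝓝 1⁻¹) := hvn.inv₀ one_ne_zero
        rw [inv_one] at h1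
        have := h1.smul hvw
        rwa [one_smul] at this
      have hdiff : Tendsto (fun k => ‖(‖u k‖⁻¹ • u k) - (‖v k‖⁻¹ • v k)‖) atTop (𝓝 0) := by
        have := (hulim.sub hvlim).norm
        rwa [sub_self, norm_zero] at this
      have hevbound : ∀ᶠ k in atTop, eps ≤ ‖(‖u k‖⁻¹ • u k) - (‖v k‖⁻¹ • v k)‖ := by
        filter_upwards [huev, hvev] with k hku hkv
        have hu0 : u k ≠ 0 := fun h => by rw [h] at hku; simp at hku
        have hv0 : v k ≠ 0 := fun h => by rw [h] at hkv; simp at hkv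
        apply htrans (z k) (hz k)
        · exact (E (z k)).smul_mem _ (projSub_mem _ _)
        · exact (F (z k)).smul_mem _ (projSub_mem _ _)
        · exact norm_smul_inv_norm hu0
        · exact norm_smul_inv_norm hv0
      have : eps ≤ 0 := ge_of_tendsto hdiff hevbound
      linarith
    have hcompl' : IsCompl E' F' := isCompl_of_disjoint_finrank hdisj (by omega)
    -- forward domination in the limit
    have hfw : ∀ n : ℕ, ∀ u ∈ E', ∀ v ∈ F',
        ‖fderiv ℝ (f^[n]) x u‖ * ‖v‖ ≤ C * lam ^ n * (‖fderiv ℝ (f^[n]) x v‖ * ‖u‖) := by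
      intro n u hu v hv
      have hTu : Tendsto (fun k => fderiv ℝ (f^[n]) (z k)) atTop (𝓝 (fderiv ℝ (f^[n]) x)) :=
        (((hiterC1 n).continuous_fderiv one_ne_zero).tendsto x).comp hzx
      have huk : Tendsto (fun k => projSub (E (z k)) u) atTop (𝓝 u) := tendsto_proj_apply hPE hu
      have hvk : Tendsto (fun k => projSub (F (z k)) v) atTop (𝓝 v) := tendsto_proj_apply hPF hv
      have hL : Tendsto (fun k => ‖fderiv ℝ (f^[n]) (z k) (projSub (E (z k)) u)‖ *
          ‖projSub (F (z k)) v‖) atTop (𝓝 (‖fderiv ℝ (f^[n]) x u‖ * ‖v‖)) :=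
        ((tendsto_clm_apply hTu huk).norm).mul hvk.norm
      have hR : Tendsto (fun k => C * lam ^ n * (‖fderiv ℝ (f^[n]) (z k) (projSub (F (z k)) v)‖ *
          ‖projSub (E (z k)) u‖)) atTop
          (𝓝 (C * lam ^ n * (‖fderiv ℝ (f^[n]) x v‖ * ‖u‖))) :=
        (((tendsto_clm_apply hTu hvk).norm).mul huk.norm).const_mul _
      refine le_of_tendsto_of_tendsto hL hR (Eventually.of_forall fun k => ?_)
      exact hdomA (z k) (hz k) n _ (projSub_mem _ _) _ (projSub_mem _ _)
    -- backward domination in the limit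
    have hbw : ∀ n : ℕ, ∀ u ∈ E', ∀ v ∈ F',
        ‖fderiv ℝ (g^[n]) x v‖ * ‖u‖ ≤ C * lam ^ n * (‖fderiv ℝ (g^[n]) x u‖ * ‖v‖) := by
      intro n u hu v hv
      have hTu : Tendsto (fun k => fderiv ℝ (g^[n]) (z k)) atTop (𝓝 (fderiv ℝ (g^[n]) x)) :=
        (((hgiterC1 n).continuous_fderiv one_ne_zero).tendsto x).comp hzx
      have huk : Tendsto (fun k => projSub (E (z k)) u) atTop (𝓝 u) := tendsto_proj_apply hPE hu
      have hvk : Tendsto (fun k => projSub (F (z k)) v) atTop (𝓝 v) := tendsto_proj_apply hPF hv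
      have hL : Tendsto (fun k => ‖fderiv ℝ (g^[n]) (z k) (projSub (F (z k)) v)‖ *
          ‖projSub (E (z k)) u‖) atTop (𝓝 (‖fderiv ℝ (g^[n]) x v‖ * ‖u‖)) :=
        ((tendsto_clm_apply hTu hvk).norm).mul huk.norm
      have hR : Tendsto (fun k => C * lam ^ n * (‖fderiv ℝ (g^[n]) (z k) (projSub (E (z k)) u)‖ *
          ‖projSub (F (z k)) v‖)) atTop
          (𝓝 (C * lam ^ n * (‖fderiv ℝ (g^[n]) x u‖ * ‖v‖))) :=
        (((tendsto_clm_apply hTu huk).norm).mul hvk.norm).const_mul _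
      refine le_of_tendsto_of_tendsto hL hR (Eventually.of_forall fun k => ?_)
      exact hdomB (z k) (hz k) n _ (projSub_mem _ _) _ (projSub_mem _ _)
    exact ⟨⟨hrkE', hrkF'⟩, hcompl', hfw, hbw⟩
  -- uniqueness of admissible limits
  have huniq : ∀ (x : Euc d) (z1 z2 : ℕ → Euc d) (E1 F1 E2 F2 : Submodule ℝ (Euc d)),
      (∀ k, z1 k ∈ Λ₀) → Tendsto z1 atTop (𝓝 x) →
      Tendsto (fun k => projSub (E (z1 k))) atTop (𝓝 (projSub E1)) →
      Tendsto (fun k => projSub (F (z1 k))) atTop (𝓝 (projSub F1)) →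
      (∀ k, z2 k ∈ Λ₀) → Tendsto z2 atTop (𝓝 x) →
      Tendsto (fun k => projSub (E (z2 k))) atTop (𝓝 (projSub E2)) →
      Tendsto (fun k => projSub (F (z2 k))) atTop (𝓝 (projSub F2)) →
      E1 = E2 ∧ F1 = F2 := by
    intro x z1 z2 E1 F1 E2 F2 hz1 hzx1 hPE1 hPF1 hz2 hzx2 hPE2 hPF2
    obtain ⟨⟨hrE1, hrF1⟩, hc1, hfw1, hbw1⟩ := hlim x z1 E1 F1 hz1 hzx1 hPE1 hPF1
    obtain ⟨⟨hrE2, hrF2⟩, hc2, hfw2, hbw2⟩ := hlim x z2 E2 F2 hz2 hzx2 hPE2 hPF2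
    constructor
    · exact splitting_unique_aux (A := fun n => fderiv ℝ (f^[n]) x)
        (fun n w hw => hAinj n x w hw) hC hlam0 hlam1 hc1 hc2
        (by rw [hrE1, hrE2]) hfw1 hfw2
    · exact splitting_unique_aux (A := fun n => fderiv ℝ (g^[n]) x)
        (fun n w hw => hBinj n x w hw) hC hlam0 hlam1 hc1.symm hc2.symm
        (by rw [hrF1, hrF2]) (fun n v hv u hu => hbw1 n u hu v hv)
        (fun n v hv u hu => hbw2 n u hu v hv)
  -- choice of the extension
  have hadm : ∀ x : Euc d, ∃ p : Submodule ℝ (Euc d) × Submodule ℝ (Euc d),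
      x ∈ closure Λ₀ → ∃ z : ℕ → Euc d, (∀ k, z k ∈ Λ₀) ∧ Tendsto z atTop (𝓝 x) ∧
        Tendsto (fun k => projSub (E (z k))) atTop (𝓝 (projSub p.1)) ∧
        Tendsto (fun k => projSub (F (z k))) atTop (𝓝 (projSub p.2)) := by
    intro x
    by_cases hx : x ∈ closure Λ₀
    · obtain ⟨z, hz, hzx⟩ := mem_closure_iff_seq_limit.mp hx
      obtain ⟨E', F', φ, hφ, hPE, hPF⟩ := hex z hz
      exact ⟨(E', F'), fun _ =>
        ⟨fun k => z (φ k), fun k => hz _, hzx.comp hφ.tendsto_atTop, hPE, hPF⟩⟩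
    · exact ⟨(⊥, ⊥), fun h => absurd h hx⟩
  choose EFp hEFp using hadm
  set Ebar : Euc d → Submodule ℝ (Euc d) := fun x => (EFp x).1 with hEbardef
  set Fbar : Euc d → Submodule ℝ (Euc d) := fun x => (EFp x).2 with hFbardef
  have hbarlim : ∀ x ∈ closure Λ₀, ∃ z : ℕ → Euc d, (∀ k, z k ∈ Λ₀) ∧
      Tendsto z atTop (𝓝 x) ∧
      Tendsto (fun k => projSub (E (z k))) atTop (𝓝 (projSub (Ebar x))) ∧
      Tendsto (fun k => projSub (F (z k))) atTop (𝓝 (projSub (Fbar x))) :=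
    fun x hx => hEFp x hx
  -- key uniqueness against the chosen splitting
  have hkey : ∀ x ∈ closure Λ₀, ∀ (z : ℕ → Euc d) (E' F' : Submodule ℝ (Euc d)),
      (∀ k, z k ∈ Λ₀) → Tendsto z atTop (𝓝 x) →
      Tendsto (fun k => projSub (E (z k))) atTop (𝓝 (projSub E')) →
      Tendsto (fun k => projSub (F (z k))) atTop (𝓝 (projSub F')) →
      E' = Ebar x ∧ F' = Fbar x := by
    intro x hx z E' F' hz hzx hPE hPF
    obtain ⟨z0, hz0, hzx0, hPE0, hPF0⟩ := hbarlim x hx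
    exact huniq x z z0 E' F' (Ebar x) (Fbar x) hz hzx hPE hPF hz0 hzx0 hPE0 hPF0
  -- agreement on Λ₀
  have hagree : ∀ x ∈ Λ₀, Ebar x = E x ∧ Fbar x = F x := by
    intro x hx
    have h := hkey x (subset_closure hx) (fun _ => x) (E x) (F x) (fun _ => hx)
      tendsto_const_nhds tendsto_const_nhds tendsto_const_nhds
    exact ⟨h.1.symm, h.2.symm⟩
  -- properties of the chosen splitting
  have hprops : ∀ x ∈ closure Λ₀,
      (finrank ℝ (Ebar x) = i ∧ finrank ℝ (Fbar x) = d - i) ∧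
      IsCompl (Ebar x) (Fbar x) ∧
      (∀ n : ℕ, ∀ u ∈ Ebar x, ∀ v ∈ Fbar x,
        ‖fderiv ℝ (f^[n]) x u‖ * ‖v‖ ≤ C * lam ^ n * (‖fderiv ℝ (f^[n]) x v‖ * ‖u‖)) ∧
      (∀ n : ℕ, ∀ u ∈ Ebar x, ∀ v ∈ Fbar x,
        ‖fderiv ℝ (g^[n]) x v‖ * ‖u‖ ≤ C * lam ^ n * (‖fderiv ℝ (g^[n]) x u‖ * ‖v‖)) := by
    intro x hx
    obtain ⟨z, hz, hzx, hPE, hPF⟩ := hbarlim x hx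
    exact hlim x z _ _ hz hzx hPE hPF
  -- injectivity of Df and rank of images
  have hf1 : ∀ (x w : Euc d), w ≠ 0 → fderiv ℝ f x w ≠ 0 := by
    intro x w hw
    have := hAinj 1 x w hw
    rwa [Function.iterate_one] at this
  have hDfinj : ∀ x : Euc d, Function.Injective (fderiv ℝ f x) := by
    intro x a b hab
    by_contra hne
    exact hf1 x (a - b) (sub_ne_zero.mpr hne) (by rw [map_sub, hab, sub_self])
  have hmaprank : ∀ (x : Euc d) (p : Submodule ℝ (Euc d)),
      finrank ℝ (p.map ((fderiv ℝ f x : Euc d →ₗ[ℝ] Euc d))) = finrank ℝ p := by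
    intro x p
    have h := (Submodule.equivMapOfInjective
      ((fderiv ℝ f x : Euc d →ₗ[ℝ] Euc d)) (hDfinj x) p).finrank_eq
    have hreq : p.map ((fderiv ℝ f x : Euc d →ₗ[ℝ] Euc d)) = p.map ((fderiv ℝ f x : Euc d →ₗ[ℝ] Euc d)) := rfl
    rw [hreq]
    exact h.symm
  -- invariance of the chosen splitting
  have hmapinv : ∀ x ∈ closure Λ₀, (Ebar x).map ((fderiv ℝ f x : Euc d →ₗ[ℝ] Euc d)) = Ebar (f x) ∧
      (Fbar x).map ((fderiv ℝ f x : Euc d →ₗ[ℝ] Euc d)) = Fbar (f x) := by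
    intro x hx
    obtain ⟨z, hz, hzx, hPE, hPF⟩ := hbarlim x hx
    have hfz : ∀ k, f (z k) ∈ Λ₀ := fun k => hfmem _ (hz k)
    obtain ⟨E3, F3, φ, hφ, hPE3, hPF3⟩ := hex (fun k => f (z k)) hfz
    have hfx : f x ∈ closure Λ₀ := by rw [← hclos]; exact Set.mem_image_of_mem f hx
    have hz3 : ∀ k, f (z (φ k)) ∈ Λ₀ := fun k => hfmem _ (hz _)
    have hzxφ : Tendsto (fun k => z (φ k)) atTop (𝓝 x) := hzx.comp hφ.tendsto_atTop
    have hzx3 : Tendsto (fun k => f (z (φ k))) atTop (𝓝 (f x)) := (hfc.tendsto x).comp hzxφ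
    have h3 := hkey (f x) hfx (fun k => f (z (φ k))) E3 F3 hz3 hzx3 hPE3 hPF3
    obtain ⟨⟨hrE3, hrF3⟩, _, _, _⟩ :=
      hlim (f x) (fun k => f (z (φ k))) E3 F3 hz3 hzx3 hPE3 hPF3
    obtain ⟨⟨hrEx, hrFx⟩, _, _, _⟩ := hprops x hx
    have hTf : Tendsto (fun k => fderiv ℝ f (z (φ k))) atTop (𝓝 (fderiv ℝ f x)) :=
      ((hfC1.continuous_fderiv one_ne_zero).tendsto x).comp hzxφ
    have hsubE : (Ebar x).map ((fderiv ℝ f x : Euc d →ₗ[ℝ] Euc d)) ≤ E3 := by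
      intro w hw
      obtain ⟨u, hu, rfl⟩ := Submodule.mem_map.mp hw
      have huk : Tendsto (fun k => projSub (E (z (φ k))) u) atTop (𝓝 u) :=
        (tendsto_proj_apply hPE hu).comp hφ.tendsto_atTop
      have hconv : Tendsto (fun k => fderiv ℝ f (z (φ k)) (projSub (E (z (φ k))) u)) atTop
          (𝓝 (fderiv ℝ f x u)) := tendsto_clm_apply hTf huk
      refine mem_of_tendsto_proj hPE3 (fun k => ?_) hconv
      rw [← hEinv (z (φ k)) (hz _)]
      exact Submodule.mem_map_of_mem (projSub_mem _ _)
    have hsubF : (Fbar x).map ((fderiv ℝ f x : Euc d →ₗ[ℝ] Euc d)) ≤ F3 := by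
      intro w hw
      obtain ⟨u, hu, rfl⟩ := Submodule.mem_map.mp hw
      have huk : Tendsto (fun k => projSub (F (z (φ k))) u) atTop (𝓝 u) :=
        (tendsto_proj_apply hPF hu).comp hφ.tendsto_atTop
      have hconv : Tendsto (fun k => fderiv ℝ f (z (φ k)) (projSub (F (z (φ k))) u)) atTop
          (𝓝 (fderiv ℝ f x u)) := tendsto_clm_apply hTf huk
      refine mem_of_tendsto_proj hPF3 (fun k => ?_) hconv
      rw [← hFinv (z (φ k)) (hz _)]
      exact Submodule.mem_map_of_mem (projSub_mem _ _)
    constructor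
    · rw [← h3.1]
      exact Submodule.eq_of_le_of_finrank_eq hsubE (by rw [hmaprank, hrEx, hrE3])
    · rw [← h3.2]
      exact Submodule.eq_of_le_of_finrank_eq hsubF (by rw [hmaprank, hrFx, hrF3])
  -- continuity of the projections on the closure
  have hcont : ContinuousOn (fun x => (projSub (Ebar x), projSub (Fbar x))) (closure Λ₀) := by
    intro x hx
    have hΛne : Λ₀.Nonempty := closure_nonempty_iff.mp ⟨x, hx⟩
    obtain ⟨x₀, hx₀⟩ := hΛne
    rw [ContinuousWithinAt]
    apply tendsto_iff_seq_tendsto.mpr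
    intro zs hzs
    rw [tendsto_nhdsWithin_iff] at hzs
    obtain ⟨hzs1, hzs2⟩ := hzs
    apply tendsto_of_subseq_tendsto
    intro ns hns
    set y : ℕ → Euc d := fun k => zs (ns k) with hy
    have hyx : Tendsto y atTop (𝓝 x) := hzs1.comp hns
    have hyev : ∀ᶠ k in atTop, y k ∈ closure Λ₀ := hns.eventually hzs2
    -- diagonal approximation in Λ₀
    have hdiag : ∀ k : ℕ, ∃ w : Euc d, w ∈ Λ₀ ∧
        (y k ∈ closure Λ₀ → dist w (y k) < 1/(k+1) ∧
          ‖projSub (E w) - projSub (Ebar (y k))‖ < 1/(k+1) ∧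
          ‖projSub (F w) - projSub (Fbar (y k))‖ < 1/(k+1)) := by
      intro k
      have hkpos : (0:ℝ) < 1/(k+1) := by positivity
      by_cases hcl : y k ∈ closure Λ₀
      · obtain ⟨z, hz, hzy, hPE, hPF⟩ := hbarlim (y k) hcl
        have h1 : ∀ᶠ j in atTop, z j ∈ Metric.ball (y k) (1/(k+1)) :=
          hzy.eventually (Metric.ball_mem_nhds _ hkpos)
        have h2 : ∀ᶠ j in atTop, projSub (E (z j)) ∈
            Metric.ball (projSub (Ebar (y k))) (1/(k+1)) :=
          hPE.eventually (Metric.ball_mem_nhds _ hkpos)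
        have h3 : ∀ᶠ j in atTop, projSub (F (z j)) ∈
            Metric.ball (projSub (Fbar (y k))) (1/(k+1)) :=
          hPF.eventually (Metric.ball_mem_nhds _ hkpos)
        obtain ⟨j, hj1, hj2, hj3⟩ := (h1.and (h2.and h3)).exists
        refine ⟨z j, hz j, fun _ => ⟨?_, ?_, ?_⟩⟩
        · exact Metric.mem_ball.mp hj1
        · rw [← dist_eq_norm]; exact Metric.mem_ball.mp hj2
        · rw [← dist_eq_norm]; exact Metric.mem_ball.mp hj3
      · exact ⟨x₀, hx₀, fun h => absurd h hcl⟩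
    choose w hwΛ hw using hdiag
    have hone : Tendsto (fun k : ℕ => (1:ℝ)/(k+1)) atTop (𝓝 0) :=
      tendsto_one_div_add_atTop_nhds_zero_nat
    have hwx : Tendsto w atTop (𝓝 x) := by
      rw [tendsto_iff_dist_tendsto_zero]
      apply squeeze_zero' (Eventually.of_forall fun k => dist_nonneg)
      · filter_upwards [hyev] with k hk
        calc dist (w k) x ≤ dist (w k) (y k) + dist (y k) x := dist_triangle _ _ _
          _ ≤ 1/(k+1) + dist (y k) x := by
              have := (hw k hk).1; linarith
      · have h2 : Tendsto (fun k => dist (y k) x) atTop (𝓝 0) :=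
          tendsto_iff_dist_tendsto_zero.mp hyx
        have := hone.add h2
        rwa [add_zero] at this
    obtain ⟨E3, F3, φ, hφ, hPE3, hPF3⟩ := hex w hwΛ
    have h3 := hkey x hx (fun k => w (φ k)) E3 F3 (fun k => hwΛ _)
      (hwx.comp hφ.tendsto_atTop) hPE3 hPF3
    rw [h3.1] at hPE3
    rw [h3.2] at hPF3
    have hφev : ∀ᶠ j in atTop, y (φ j) ∈ closure Λ₀ := hφ.tendsto_atTop.eventually hyev
    have honeφ : Tendsto (fun j : ℕ => (1:ℝ)/(φ j + 1)) atTop (𝓝 0) := by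
      apply squeeze_zero (fun j => by positivity) (fun j => ?_) hone
      have hja : j ≤ φ j := hφ.le_apply
      apply div_le_div_of_nonneg_left one_pos.le (by positivity)
      push_cast
      have : (j:ℝ) ≤ (φ j : ℝ) := by exact_mod_cast hja
      linarith
    have hEt : Tendsto (fun j => projSub (Ebar (y (φ j)))) atTop (𝓝 (projSub (Ebar x))) := by
      rw [tendsto_iff_dist_tendsto_zero]
      apply squeeze_zero' (Eventually.of_forall fun j => dist_nonneg)
      · filter_upwards [hφev] with j hj
        calc dist (projSub (Ebar (y (φ j)))) (projSub (Ebar x))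
            ≤ dist (projSub (Ebar (y (φ j)))) (projSub (E (w (φ j)))) +
              dist (projSub (E (w (φ j)))) (projSub (Ebar x)) := dist_triangle _ _ _
          _ ≤ 1/(φ j + 1) + dist (projSub (E (w (φ j)))) (projSub (Ebar x)) := by
              have := (hw (φ j) hj).2.1
              rw [dist_comm, dist_eq_norm]
              linarith
      · have h2 : Tendsto (fun j => dist (projSub (E (w (φ j)))) (projSub (Ebar x)))
            atTop (𝓝 0) := tendsto_iff_dist_tendsto_zero.mp hPE3
        have := honeφ.add h2
        rwa [add_zero] at this
    have hFt : Tendsto (fun j => projSub (Fbar (y (φ j)))) atTop (𝓝 (projSub (Fbar x))) := by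
      rw [tendsto_iff_dist_tendsto_zero]
      apply squeeze_zero' (Eventually.of_forall fun j => dist_nonneg)
      · filter_upwards [hφev] with j hj
        calc dist (projSub (Fbar (y (φ j)))) (projSub (Fbar x))
            ≤ dist (projSub (Fbar (y (φ j)))) (projSub (F (w (φ j)))) +
              dist (projSub (F (w (φ j)))) (projSub (Fbar x)) := dist_triangle _ _ _
          _ ≤ 1/(φ j + 1) + dist (projSub (F (w (φ j)))) (projSub (Fbar x)) := by
              have := (hw (φ j) hj).2.2
              rw [dist_comm, dist_eq_norm]
              linarith
      · have h2 : Tendsto (fun j => dist (projSub (F (w (φ j)))) (projSub (Fbar x)))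
            atTop (𝓝 0) := tendsto_iff_dist_tendsto_zero.mp hPF3
        have := honeφ.add h2
        rwa [add_zero] at this
    exact ⟨φ, hEt.prodMk_nhds hFt⟩
  -- final assembly
  refine ⟨hclos, Ebar, Fbar, hagree, ⟨?_, ?_, ?_, ?_, ?_, ?_⟩, ?_⟩
  · exact fun x hx => (hprops x hx).2.1
  · exact fun x hx => (hmapinv x hx).1
  · exact fun x hx => (hmapinv x hx).2
  · exact (continuous_fst.comp_continuousOn hcont : _)
  · exact (continuous_snd.comp_continuousOn hcont : _)
  · intro x hx n u hu hu0 v hv hv0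
    have h := (hprops x hx).2.2.1 n u hu v hv
    have hupos : 0 < ‖u‖ := norm_pos_iff.mpr hu0
    have hvpos : 0 < ‖v‖ := norm_pos_iff.mpr hv0
    rw [mul_div_assoc' (C * lam ^ n), div_le_div_iff₀ hupos hvpos]
    linear_combination h
  · exact fun x hx => (hprops x hx).1.1
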